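/- Let F be either ℚ or an imaginary quadratic field, with ring of integers O_F, and let a ∈ O_F be nonzero, square-free and not a square in F, so that K = F(√a) is a quadratic field extension with nontrivial F-automorphism σ and norm N_{K/F}(x) = x·σ(x). Fix a field embedding φ : K → ℂ. Let b ∈ K \ F and write b = b_n / b_d with b_n, b_d ∈ O_K and b_d ≠ 0. Then for all x0, x1 ∈ O_K with (x0, x1) ≠ (0, 0), one has |φ( N_{K/F}( N_{K/F}(x0) − b·N_{K/F}(x1) ) )| ≥ 1 / |φ( N_{K/F}(b_d) )|. In particular the 2×4 multiblock code built from Cay(K,b) over O_K satisfies the generalized non-vanishing determinant property. -/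

import Mathlib

open NumberField

lemma aux_unique_place {F : Type*} [Field F] [NumberField F]
    (hF : Module.finrank ℚ F = 1 ∨
      (Module.finrank ℚ F = 2 ∧ ∀ w : InfinitePlace F, w.IsComplex)) :
    ∀ w w' : InfinitePlace F, w = w' := by
  have hsum := NumberField.InfinitePlace.sum_mult_eq (K := F)
  have hcard : Fintype.card (InfinitePlace F) ≤ 1 := by
    rcases hF with h1 | ⟨h2, hc⟩
    · have hle : Fintype.card (InfinitePlace F) ≤ ∑ w : InfinitePlace F, w.mult := by
        rw [Fintype.card, Finset.card_eq_sum_ones]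
        exact Finset.sum_le_sum fun w _ => NumberField.InfinitePlace.mult_pos
      omega
    · have : ∑ w : InfinitePlace F, w.mult = 2 * Fintype.card (InfinitePlace F) := by
        rw [Finset.sum_congr rfl (fun w _ => show w.mult = 2 by
          simp [NumberField.InfinitePlace.mult,
            NumberField.InfinitePlace.not_isReal_iff_isComplex.mpr (hc w)])]
        rw [Finset.sum_const, smul_eq_mul, Finset.card_univ, mul_comm]
      omega
  exact fun w w' => Fintype.card_le_one_iff.mp hcard w w'

lemma aux_one_le_abs {F : Type*} [Field F] [NumberField F]
    (huniq : ∀ w w' : InfinitePlace F, w = w')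
    (z : 𝓞 F) (hz : z ≠ 0) (ψ : F →+* ℂ) :
    1 ≤ ‖ψ (z : F)‖ := by
  have := NumberField.InfinitePlace.one_le_of_lt_one
    (w := NumberField.InfinitePlace.mk ψ) hz
    (fun w hw => absurd (huniq w _) hw)
  rwa [NumberField.InfinitePlace.apply] at this

theorem multiblock_code_generalized_nvd {F K : Type*} [Field F] [NumberField F]
    [Field K] [NumberField K] [Algebra F K]
    (hF : Module.finrank ℚ F = 1 ∨
      (Module.finrank ℚ F = 2 ∧ ∀ w : InfinitePlace F, w.IsComplex))
    (a : 𝓞 F) (ha : a ≠ 0) (hasf : Squarefree a) (hasq : ¬∃ y : F, y ^ 2 = (a : F))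
    (hdim : Module.finrank F K = 2)
    (s : K) (hs : s ^ 2 = algebraMap F K (a : F))
    (σ : K ≃ₐ[F] K) (hσ : σ ≠ AlgEquiv.refl)
    (b : K) (hb : b ∉ Set.range (algebraMap F K))
    (b_n b_d : 𝓞 K) (hbd : (b_d : K) ≠ 0) (hbe : (b_n : K) = b * (b_d : K))
    (φ : K →+* ℂ) :
    ∀ x0 x1 : 𝓞 K, (x0, x1) ≠ (0, 0) →
      1 / ‖φ ((b_d : K) * σ (b_d : K))‖ ≤
        ‖φ
          ((((x0 : K) * σ (x0 : K)) - b * ((x1 : K) * σ (x1 : K))) *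
            σ (((x0 : K) * σ (x0 : K)) - b * ((x1 : K) * σ (x1 : K))))‖ := by
  -- basic facts
  have halg : Function.Injective (algebraMap F K) := (algebraMap F K).injective
  have haF : (a : F) ≠ 0 := by
    simpa using ha
  have hs0 : s ≠ 0 := by
    intro h
    apply haF
    apply halg
    rw [map_zero, ← hs, h]
    ring
  have hsnot : s ∉ Set.range (algebraMap F K) := by
    rintro ⟨y, rfl⟩
    exact hasq ⟨y, halg (by rw [map_pow]; exact hs)⟩
  -- linear independence of 1, s and decomposition of any element of K
  have hli : LinearIndependent F ![1, s] := by
    rw [LinearIndependent.pair_iff]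
    intro p q hpq
    by_cases hq : q = 0
    · refine ⟨?_, hq⟩
      subst hq
      simpa [Algebra.algebraMap_eq_smul_one] using
        halg (a₂ := 0) (by simpa [Algebra.smul_def] using hpq)
    · exfalso
      apply hsnot
      refine ⟨-p / q, ?_⟩
      have hq' : algebraMap F K q ≠ 0 := by
        simpa using fun h => hq (halg (by simpa using h))
      rw [map_div₀, map_neg, neg_div, neg_eq_iff_eq_neg, div_eq_iff hq']
      rw [Algebra.smul_def, Algebra.smul_def, mul_one] at hpq
      linear_combination hpq
  have hdecomp : ∀ x : K, ∃ p q : F, x = algebraMap F K p + algebraMap F K q * s := by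
    intro x
    have hcard : Fintype.card (Fin 2) = Module.finrank F K := by simp [hdim]
    let B : Module.Basis (Fin 2) F K := basisOfLinearIndependentOfCardEqFinrank hli hcard
    have hx := B.sum_repr x
    rw [Fin.sum_univ_two] at hx
    have h0 : B 0 = 1 := by
      simp [B, coe_basisOfLinearIndependentOfCardEqFinrank]
    have h1 : B 1 = s := by
      simp [B, coe_basisOfLinearIndependentOfCardEqFinrank]
    rw [h0, h1] at hx
    refine ⟨B.repr x 0, B.repr x 1, ?_⟩
    rw [Algebra.smul_def, Algebra.smul_def, mul_one] at hx
    exact hx.symm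
  -- σ s = -s
  have hσs : σ s = -s := by
    have h2 : (σ s) ^ 2 = s ^ 2 := by
      rw [← map_pow, hs, AlgEquiv.commutes]
    have hfac : (σ s - s) * (σ s + s) = 0 := by linear_combination h2
    rcases mul_eq_zero.mp hfac with h | h
    · exfalso
      apply hσ
      have hss : σ s = s := by linear_combination h
      ext x
      obtain ⟨p, q, rfl⟩ := hdecomp x
      simp [map_add, map_mul, AlgEquiv.commutes, hss]
    · linear_combination h
  -- σ is an involution
  have hinv : ∀ x : K, σ (σ x) = x := by
    intro x
    obtain ⟨p, q, rfl⟩ := hdecomp x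
    simp [map_add, map_mul, AlgEquiv.commutes, hσs]
  -- σ-fixed elements are in F
  have hfix : ∀ x : K, σ x = x → ∃ p : F, algebraMap F K p = x := by
    intro x hx
    obtain ⟨p, q, rfl⟩ := hdecomp x
    simp only [map_add, map_mul, AlgEquiv.commutes, hσs, mul_neg] at hx
    have hq : algebraMap F K q * s = 0 := by
      have h2 : (2 : K) ≠ 0 := two_ne_zero
      have : (2 : K) * (algebraMap F K q * s) = 0 := by linear_combination -hx
      exact (mul_eq_zero.mp this).resolve_left h2
    rcases mul_eq_zero.mp hq with h | h
    · exact ⟨p, by rw [h, zero_mul, add_zero]⟩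
    · exact absurd h hs0
  -- main argument
  intro x0 x1 hx
  set n0 : K := (x0 : K) * σ (x0 : K) with hn0
  set n1 : K := (x1 : K) * σ (x1 : K) with hn1
  set m : K := n0 - b * n1 with hm
  set y : K := n0 * (b_d : K) - (b_n : K) * n1 with hy
  -- m ≠ 0
  have hn0fix : σ n0 = n0 := by rw [hn0, map_mul, hinv]; ring
  have hn1fix : σ n1 = n1 := by rw [hn1, map_mul, hinv]; ring
  have hm0 : m ≠ 0 := by
    intro h
    by_cases h1 : x1 = 0
    · subst h1
      have hx0 : x0 ≠ 0 := by simpa using hx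
      have hx0' : (x0 : K) ≠ 0 := by simpa using hx0
      have hz : n0 = 0 := by
        rw [hm, hn1] at h
        simpa using h
      rw [hn0] at hz
      exact hx0' (by
        rcases mul_eq_zero.mp hz with h' | h'
        · exact h'
        · exact σ.injective (by rw [h', map_zero]))
    · have hx1' : (x1 : K) ≠ 0 := by simpa using h1
      have hn1ne : n1 ≠ 0 := by
        rw [hn1]
        exact mul_ne_zero hx1' (fun h' => hx1' (σ.injective (by rw [h', map_zero])))
      obtain ⟨p0, hp0⟩ := hfix n0 hn0fix
      obtain ⟨p1, hp1⟩ := hfix n1 hn1fix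
      apply hb
      have hp1ne : p1 ≠ 0 := fun h' => hn1ne (by rw [← hp1, h', map_zero])
      refine ⟨p0 / p1, ?_⟩
      rw [map_div₀, hp0, hp1]
      rw [hm, sub_eq_zero] at h
      rw [div_eq_iff hn1ne]
      linear_combination h
  have hy0 : y ≠ 0 := by
    have : y = m * (b_d : K) := by rw [hy, hm, hbe]; ring
    rw [this]
    exact mul_ne_zero hm0 hbd
  -- y * σ y is a nonzero algebraic integer in F
  have hyfix : σ (y * σ y) = y * σ y := by rw [map_mul, hinv]; ring
  obtain ⟨zF, hzF⟩ := hfix (y * σ y) hyfix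
  have hintσ : ∀ u : K, IsIntegral ℤ u → IsIntegral ℤ (σ u) := by
    intro u hu
    have := hu.map ((σ : K →+* K).toIntAlgHom)
    exact this
  have hyint : IsIntegral ℤ y := by
    have h0 : IsIntegral ℤ (x0 : K) := x0.2
    have h1 : IsIntegral ℤ (x1 : K) := x1.2
    have hd : IsIntegral ℤ (b_d : K) := b_d.2
    have hn : IsIntegral ℤ (b_n : K) := b_n.2
    exact ((h0.mul (hintσ _ h0)).mul hd).sub (hn.mul (h1.mul (hintσ _ h1)))
  have hzint : IsIntegral ℤ zF := by
    rw [← isIntegral_algebraMap_iff halg, hzF]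
    exact hyint.mul (hintσ _ hyint)
  have hzne : zF ≠ 0 := by
    intro h
    rw [h, map_zero] at hzF
    rcases mul_eq_zero.mp hzF.symm with h' | h'
    · exact hy0 h'
    · exact hy0 (σ.injective (by rw [h', map_zero]))
  -- lower bound from the unique infinite place of F
  have hkey : 1 ≤ ‖φ (algebraMap F K zF)‖ := by
    have := aux_one_le_abs (aux_unique_place hF) ⟨zF, hzint⟩ (by
      intro h
      exact hzne (congrArg (fun t : 𝓞 F => (t : F)) h))
      (φ.comp (algebraMap F K))
    exact this
  -- conclude
  have hy' : y = m * (b_d : K) := by rw [hy, hm, hbe]; ring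
  have hdK : (b_d : K) * σ (b_d : K) ≠ 0 :=
    mul_ne_zero hbd (fun h => hbd (σ.injective (by rw [h, map_zero])))
  have hpos : 0 < ‖φ ((b_d : K) * σ (b_d : K))‖ :=
    norm_pos_iff.mpr ((map_ne_zero φ).mpr hdK)
  have hEd : (m * σ m) * ((b_d : K) * σ (b_d : K)) = algebraMap F K zF := by
    rw [hzF, hy', map_mul]; ring
  rw [div_le_iff₀ hpos]
  calc (1 : ℝ) ≤ ‖φ (algebraMap F K zF)‖ := hkey
    _ = ‖φ (m * σ m)‖ * ‖φ ((b_d : K) * σ (b_d : K))‖ := by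
        rw [← hEd, map_mul, norm_mul]
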